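/- With σ = a t_3^{-1} t_2^{-1} t_1^{-1} computed in the explicit 3-dimensional representation of B_4, the matrix σ equals [[0, ε, 1],[0, 1, 0],[1, -ε, 0]] and satisfies σ^2 = 1 on the subrepresentation generated appropriately; in particular σ has the stated matrix form. -/

import Mathlib

/-- In the explicit 3-dimensional representation of `B₄` (where `t₃ = t₁`),
the cyclic rotation operator `σ = a t₃⁻¹ t₂⁻¹ t₁⁻¹` is given by the matrix
`[[0, ε, 1], [0, 1, 0], [1, -ε, 0]]`, and it satisfies `σ² = 1`. -/
theorem bmw_B4_sigma_matrix {F : Type*} [Field F] (p q : F)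
    (hp : p ≠ 0) (hq : q ≠ 0) (hp2 : p ^ 2 ≠ 1) :
    let a : F := p⁻¹ * q⁻¹ ^ 2
    let ε : F := p - p⁻¹
    let t₁ : Matrix (Fin 3) (Fin 3) F := !![a, -(a * ε), 0; 0, ε, 1; 0, 1, 0]
    let t₂ : Matrix (Fin 3) (Fin 3) F := !![ε, 1, 0; 1, 0, 0; -ε, 0, a]
    let t₃ : Matrix (Fin 3) (Fin 3) F := t₁
    let σ : Matrix (Fin 3) (Fin 3) F := a • (t₃⁻¹ * t₂⁻¹ * t₁⁻¹)
    σ = !![0, ε, 1; 0, 1, 0; 1, -ε, 0] ∧ σ * σ = 1 := by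
  intro a ε t₁ t₂ t₃ σ
  have ha : a ≠ 0 := by
    simp only [a]
    exact mul_ne_zero (inv_ne_zero hp) (pow_ne_zero _ (inv_ne_zero hq))
  have h1 : t₁⁻¹ = !![a⁻¹, 0, ε; 0, 0, 1; 0, 1, -ε] := by
    apply Matrix.inv_eq_right_inv
    show t₁ * _ = 1
    simp only [t₁]
    ext i j
    fin_cases i <;> fin_cases j <;>
      simp [Matrix.mul_apply, Fin.sum_univ_succ, Matrix.one_apply, Matrix.vecHead, Matrix.vecTail] <;>
      field_simp <;> ring
  have h2 : t₂⁻¹ = !![0, 1, 0; 1, -ε, 0; 0, ε * a⁻¹, a⁻¹] := by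
    apply Matrix.inv_eq_right_inv
    show t₂ * _ = 1
    simp only [t₂]
    ext i j
    fin_cases i <;> fin_cases j <;>
      simp [Matrix.mul_apply, Fin.sum_univ_succ, Matrix.one_apply, Matrix.vecHead, Matrix.vecTail] <;>
      field_simp <;> ring
  have hσ : σ = !![0, ε, 1; 0, 1, 0; 1, -ε, 0] := by
    simp only [σ, t₃, h1, h2]
    ext i j
    fin_cases i <;> fin_cases j <;>
      simp [Matrix.mul_apply, Fin.sum_univ_succ, Matrix.vecHead, Matrix.vecTail, ha] <;>
      field_simp <;> ring
  refine ⟨hσ, ?_⟩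
  rw [hσ]
  ext i j
  fin_cases i <;> fin_cases j <;>
    simp [Matrix.mul_apply, Fin.sum_univ_succ, Matrix.one_apply, Matrix.vecHead, Matrix.vecTail] <;> ring
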